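/- For the univariate symmetric quadratic polynomial p = a_0 + a_1(x + x*) + a_2(x^2 + (x*)^2) + a_3 x x* + a_4 x* x in R<x,x*>, the following are equivalent: (a) p is a sum of two squares; (b) p is a sum of squares; (c) there exists lambda in R with the 3x3 matrix [[a_0, lambda, a_1 - lambda],[lambda, a_3, a_2],[a_1 - lambda, a_2, a_4]] positive semidefinite; (d) p(X) is positive semidefinite for every real square matrix X of every size; (e) p(X) is positive semidefinite for every real 2x2 matrix X; (f) -a_1^2 + a_0(2a_2 + a_3 + a_4) >= 0, a_0 >= 0, and the 2x2 matrix [[a_3, a_2],[a_2, a_4]] is positive semidefinite. -/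

import Mathlib

open scoped BigOperators

noncomputable section

/-- The free real *-algebra on `g` variables `x₁,…,x_g` and their formal adjoints
`x₁*,…,x_g*`, modeled as the monoid algebra of the free monoid on `2g` letters,
where `Sum.inl i` is `xᵢ` and `Sum.inr i` is `xᵢ*`. -/
abbrev FreeStarAlg (g : ℕ) := MonoidAlgebra ℝ (FreeMonoid (Fin g ⊕ Fin g))

namespace FreeStarAlg

variable {g : ℕ}

/-- The involution on words: reverse the word and star each letter. -/
def starWord (w : FreeMonoid (Fin g ⊕ Fin g)) : FreeMonoid (Fin g ⊕ Fin g) :=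
  FreeMonoid.ofList (((FreeMonoid.toList w).map Sum.swap).reverse)

/-- The involution `p ↦ p*` on the free *-algebra. -/
def starP (p : FreeStarAlg g) : FreeStarAlg g :=
  MonoidAlgebra.ofCoeff (Finsupp.mapDomain starWord p.coeff)

/-- The monomial corresponding to a word. -/
def mono (w : FreeMonoid (Fin g ⊕ Fin g)) : FreeStarAlg g :=
  MonoidAlgebra.single w 1

/-- Degree of a noncommutative polynomial. -/
def deg (p : FreeStarAlg g) : ℕ :=
  p.coeff.support.sup fun w => (FreeMonoid.toList w).length

/-- `p` is homogeneous of degree `d`: every word appearing in `p` has length `d`. -/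
def IsHom (d : ℕ) (p : FreeStarAlg g) : Prop :=
  ∀ w ∈ p.coeff.support, (FreeMonoid.toList w).length = d

/-- `p` is a (finite) sum of hermitian squares `qᵢ* qᵢ`. -/
def IsSOS (p : FreeStarAlg g) : Prop :=
  ∃ (k : ℕ) (q : Fin k → FreeStarAlg g), p = ∑ i, starP (q i) * q i

/-- Membership in `I + I*`. -/
def MemIplusIstar (I : Submodule (FreeStarAlg g) (FreeStarAlg g)) (p : FreeStarAlg g) : Prop :=
  ∃ u ∈ I, ∃ v ∈ I, p = u + starP v

/-- A left ideal `I` is real if `∑ aᵢ* aᵢ ∈ I + I*` forces every `aᵢ ∈ I`. -/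
def IsRealIdeal (I : Submodule (FreeStarAlg g) (FreeStarAlg g)) : Prop :=
  ∀ (r : ℕ) (a : Fin r → FreeStarAlg g),
    MemIplusIstar I (∑ i, starP (a i) * a i) → ∀ i, a i ∈ I

/-- The left ideal generated by a set `S`. -/
def leftIdealGen (S : Set (FreeStarAlg g)) : Submodule (FreeStarAlg g) (FreeStarAlg g) :=
  Submodule.span (FreeStarAlg g) S

/-- `p` is irreducible: it cannot be written as a product of two polynomials of
strictly smaller degree. -/
def Irred (p : FreeStarAlg g) : Prop :=
  ¬ ∃ q r : FreeStarAlg g, p = q * r ∧ deg q < deg p ∧ deg r < deg p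

/-- `p` is analytic: it contains no starred variables. -/
def IsAnalytic (p : FreeStarAlg g) : Prop :=
  ∀ w ∈ p.coeff.support, ∀ l ∈ FreeMonoid.toList w, l.isLeft

end FreeStarAlg

open FreeStarAlg Matrix

/-- The single variable `x` in `ℝ⟨x,x*⟩`. -/
def Xvar : FreeStarAlg 1 := mono (FreeMonoid.of (Sum.inl 0))

/-- The starred variable `x*` in `ℝ⟨x,x*⟩`. -/
def Xstar : FreeStarAlg 1 := mono (FreeMonoid.of (Sum.inr 0))

/-- Evaluation of a word at a matrix `X`, substituting `Xᵀ` for starred letters. -/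
def evalWord {n : ℕ} (X : Matrix (Fin n) (Fin n) ℝ) (w : FreeMonoid (Fin 1 ⊕ Fin 1)) :
    Matrix (Fin n) (Fin n) ℝ :=
  ((FreeMonoid.toList w).map (Sum.elim (fun _ => X) (fun _ => Xᵀ))).prod

/-- Evaluation of a univariate noncommutative polynomial at a matrix. -/
def evalP {n : ℕ} (X : Matrix (Fin n) (Fin n) ℝ) (p : FreeStarAlg 1) :
    Matrix (Fin n) (Fin n) ℝ :=
  p.coeff.sum fun w c => c • evalWord X w

/- ### Auxiliary lemmas -/

lemma starP_add' (p q : FreeStarAlg 1) : starP (p + q) = starP p + starP q := by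
  simp [starP, MonoidAlgebra.coeff_add, Finsupp.mapDomain_add, MonoidAlgebra.ofCoeff_add]

lemma starP_smul' (c : ℝ) (p : FreeStarAlg 1) : starP (c • p) = c • starP p :=
  by simp [starP, MonoidAlgebra.coeff_smul, Finsupp.mapDomain_smul]

lemma starP_one' : starP (1 : FreeStarAlg 1) = 1 := by
  simp [starP, MonoidAlgebra.one_def, MonoidAlgebra.coeff_single, Finsupp.mapDomain_single, starWord,
    MonoidAlgebra.ofCoeff_single]

lemma starP_Xvar' : starP Xvar = Xstar := by
  simp [starP, Xvar, Xstar, mono, MonoidAlgebra.coeff_single, Finsupp.mapDomain_single, starWord,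
    MonoidAlgebra.ofCoeff_single]

lemma starP_Xstar' : starP Xstar = Xvar := by
  simp [starP, Xvar, Xstar, mono, MonoidAlgebra.coeff_single, Finsupp.mapDomain_single, starWord,
    MonoidAlgebra.ofCoeff_single]

/-- Expansion of a hermitian square of an affine polynomial. -/
lemma square_expand' (α β γ : ℝ) :
    starP (α • (1:FreeStarAlg 1) + β • Xvar + γ • Xstar) *
      (α • (1:FreeStarAlg 1) + β • Xvar + γ • Xstar)
    = (α^2) • (1:FreeStarAlg 1) + (α*(β+γ)) • (Xvar + Xstar)
      + (β*γ) • (Xvar*Xvar + Xstar*Xstar) + (γ^2) • (Xvar*Xstar) + (β^2) • (Xstar*Xvar) := by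
  rw [starP_add', starP_add', starP_smul', starP_smul', starP_smul', starP_one',
    starP_Xvar', starP_Xstar']
  simp only [add_mul, mul_add, smul_mul_assoc, mul_smul_comm, smul_smul, one_mul, mul_one,
    smul_add]
  module

/-- `evalWord` as a monoid hom. -/
def evalHom' {n : ℕ} (X : Matrix (Fin n) (Fin n) ℝ) :
    FreeMonoid (Fin 1 ⊕ Fin 1) →* Matrix (Fin n) (Fin n) ℝ where
  toFun := evalWord X
  map_one' := by simp [evalWord]
  map_mul' w w' := by simp [evalWord]

lemma evalP_eq_lift' {n : ℕ} (X : Matrix (Fin n) (Fin n) ℝ) (p : FreeStarAlg 1) :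
    evalP X p = MonoidAlgebra.lift ℝ (Matrix (Fin n) (Fin n) ℝ) (FreeMonoid (Fin 1 ⊕ Fin 1))
      (evalHom' X) p := by
  rw [MonoidAlgebra.lift_apply]; rfl

lemma evalP_mul' {n : ℕ} (X : Matrix (Fin n) (Fin n) ℝ) (p q : FreeStarAlg 1) :
    evalP X (p * q) = evalP X p * evalP X q := by
  simp [evalP_eq_lift']

lemma evalP_add' {n : ℕ} (X : Matrix (Fin n) (Fin n) ℝ) (p q : FreeStarAlg 1) :
    evalP X (p + q) = evalP X p + evalP X q := by
  simp [evalP_eq_lift']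

lemma evalP_smul' {n : ℕ} (X : Matrix (Fin n) (Fin n) ℝ) (c : ℝ) (p : FreeStarAlg 1) :
    evalP X (c • p) = c • evalP X p := by
  simp [evalP_eq_lift']

lemma evalP_one' {n : ℕ} (X : Matrix (Fin n) (Fin n) ℝ) : evalP X (1 : FreeStarAlg 1) = 1 := by
  simp [evalP_eq_lift']

lemma evalP_Xvar' {n : ℕ} (X : Matrix (Fin n) (Fin n) ℝ) : evalP X Xvar = X := by
  rw [evalP_eq_lift', Xvar, mono, MonoidAlgebra.lift_single]
  change (1:ℝ) • evalWord X _ = _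
  simp [evalWord]

lemma evalP_Xstar' {n : ℕ} (X : Matrix (Fin n) (Fin n) ℝ) : evalP X Xstar = Xᵀ := by
  rw [evalP_eq_lift', Xstar, mono, MonoidAlgebra.lift_single]
  change (1:ℝ) • evalWord X _ = _
  simp [evalWord]

lemma evalWord_starWord' {n : ℕ} (X : Matrix (Fin n) (Fin n) ℝ)
    (w : FreeMonoid (Fin 1 ⊕ Fin 1)) :
    evalWord X (starWord w) = (evalWord X w)ᵀ := by
  rw [evalWord, starWord, FreeMonoid.toList_ofList]
  conv_rhs => rw [evalWord, Matrix.transpose_list_prod]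
  rw [List.map_reverse, List.map_map, List.map_map]
  have hfun : (Sum.elim (fun _ => X) (fun _ => Xᵀ) ∘ Sum.swap)
      = (transpose ∘ Sum.elim (fun _ : Fin 1 => X) (fun _ : Fin 1 => Xᵀ)) := by
    funext l; cases l <;> simp
  rw [hfun]

lemma evalP_starP' {n : ℕ} (X : Matrix (Fin n) (Fin n) ℝ) (p : FreeStarAlg 1) :
    evalP X (starP p) = (evalP X p)ᵀ := by
  rw [evalP, starP, MonoidAlgebra.coeff_ofCoeff, Finsupp.sum_mapDomain_index (by simp) (by intros; rw [add_smul])]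
  rw [evalP, Finsupp.sum, Finsupp.sum, Matrix.transpose_sum]
  exact Finset.sum_congr rfl fun w _ => by rw [evalWord_starWord', Matrix.transpose_smul]

lemma evalP_sum' {n : ℕ} (X : Matrix (Fin n) (Fin n) ℝ) (k : ℕ)
    (f : Fin k → FreeStarAlg 1) :
    evalP X (∑ i, f i) = ∑ i, evalP X (f i) := by
  simp [evalP_eq_lift']

/-- two-by-two rank-two decomposition of a PSD 2x2 matrix of numbers. -/
lemma decompB' (a2 a3 a4 : ℝ) (h3 : 0 ≤ a3) (h4 : 0 ≤ a4) (hdet : a2^2 ≤ a3*a4) :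
    ∃ β1 γ1 β2 γ2 : ℝ, a2 = β1*γ1+β2*γ2 ∧ a3 = γ1^2+γ2^2 ∧ a4 = β1^2+β2^2 := by
  rcases eq_or_lt_of_le h3 with h|h
  · have ha2 : a2 = 0 := by nlinarith [sq_nonneg a2]
    exact ⟨Real.sqrt a4, 0, 0, 0, by simp [ha2], by simp [← h], by
      simp [Real.sq_sqrt h4]⟩
  · refine ⟨a2/Real.sqrt a3, Real.sqrt a3, Real.sqrt (a4 - a2^2/a3), 0, ?_, ?_, ?_⟩
    · field_simp; simp
    · simp [Real.sq_sqrt h.le]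
    · have h1 : 0 ≤ a4 - a2^2/a3 := by
        rw [sub_nonneg, div_le_iff₀ h]; nlinarith
      rw [Real.sq_sqrt h1, div_pow, Real.sq_sqrt h.le]
      field_simp
      ring

set_option maxHeartbeats 1000000 in
lemma exists_decomp (a0 a1 a2 a3 a4 : ℝ) (h0 : 0 ≤ a0) (h3 : 0 ≤ a3) (h4 : 0 ≤ a4)
    (hdet : a2^2 ≤ a3*a4) (h1 : a1^2 ≤ a0*(2*a2+a3+a4)) :
    ∃ α1 β1 γ1 α2 β2 γ2 : ℝ,
      a0 = α1^2+α2^2 ∧ a1 = α1*(β1+γ1)+α2*(β2+γ2) ∧ a2 = β1*γ1+β2*γ2 ∧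
      a3 = γ1^2+γ2^2 ∧ a4 = β1^2+β2^2 := by
  rcases eq_or_lt_of_le h0 with ha0|ha0
  · have ha1 : a1 = 0 := by
      have h1' : a1^2 = 0 :=
        le_antisymm (by rw [← ha0] at h1; simpa using h1) (sq_nonneg a1)
      exact pow_eq_zero_iff (n := 2) (by norm_num) |>.mp h1'
    obtain ⟨β1,γ1,β2,γ2,e2,e3,e4⟩ := decompB' a2 a3 a4 h3 h4 hdet
    exact ⟨0,β1,γ1,0,β2,γ2, by simp [← ha0], by simp [ha1], e2, e3, e4⟩
  · have hDnn : 0 ≤ 2*a2+a3+a4 := by nlinarith [sq_nonneg a1]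
    rcases eq_or_lt_of_le hDnn with hDz|hDpos
    · have ha1 : a1 = 0 := by
        have h1' : a1^2 = 0 := le_antisymm (by nlinarith) (sq_nonneg a1)
        exact pow_eq_zero_iff (n := 2) (by norm_num) |>.mp h1'
      have h34 : a3 = a4 := by nlinarith [sq_nonneg (a3-a4)]
      have h2 : a2 = -a3 := by nlinarith [sq_nonneg (a3-a4)]
      refine ⟨Real.sqrt a0, 0, 0, 0, -Real.sqrt a3, Real.sqrt a3, ?_, ?_, ?_, ?_, ?_⟩
      · rw [Real.sq_sqrt ha0.le]; ring
      · simp [ha1]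
      · have := Real.sq_sqrt h3; nlinarith [this]
      · have := Real.sq_sqrt h3; nlinarith [this]
      · have := Real.sq_sqrt h3; nlinarith [this]
    · -- main case : a0 > 0, D > 0
      have hdB : 0 ≤ a3*a4 - a2^2 := by nlinarith
      have hP : 0 ≤ a0*(2*a2+a3+a4) - a1^2 := by nlinarith
      obtain ⟨s, hsdef⟩ : ∃ s, s = Real.sqrt ((a3*a4-a2^2) * (a0*(2*a2+a3+a4)-a1^2)) :=
        ⟨_, rfl⟩
      have hs0 : 0 ≤ s := hsdef ▸ Real.sqrt_nonneg _
      have hs2 : s^2 = (a3*a4-a2^2) * (a0*(2*a2+a3+a4)-a1^2) :=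
        hsdef ▸ Real.sq_sqrt (mul_nonneg hdB hP)
      obtain ⟨lam, hlamdef⟩ : ∃ lam, lam = (a1*(a2+a3)+s)/(2*a2+a3+a4) := ⟨_, rfl⟩
      have hDne : (2*a2+a3+a4) ≠ 0 := ne_of_gt hDpos
      have hlam : (2*a2+a3+a4) * lam = a1*(a2+a3)+s := by
        rw [hlamdef]; field_simp
      -- key inequalities
      have key1 : (a1*(a2+a3)+s)^2 ≤ a0*a3*(2*a2+a3+a4)^2 := by
        have e : a0*a3*(2*a2+a3+a4)^2 - (a1*(a2+a3)+s)^2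
            = (a2+a3)^2*(a0*(2*a2+a3+a4)-a1^2) + a1^2*(a3*a4-a2^2) - 2*a1*(a2+a3)*s := by
          linear_combination -hs2
        rcases eq_or_lt_of_le hdet with hq|hq
        · have hs' : s = 0 := by
            have h' : s^2 = 0 := by rw [hs2, ← hq]; ring
            exact pow_eq_zero_iff (n := 2) (by norm_num) |>.mp h'
          rw [hs'] at e ⊢
          nlinarith [mul_nonneg (sq_nonneg (a2+a3)) hP, mul_nonneg (sq_nonneg a1) hdB]
        · nlinarith [sq_nonneg ((a2+a3)*s - a1*(a3*a4-a2^2)),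
            mul_nonneg (sq_nonneg (a2+a3)) hP]
      have key2 : (a1*(a2+a4)-s)^2 ≤ a0*a4*(2*a2+a3+a4)^2 := by
        have e : a0*a4*(2*a2+a3+a4)^2 - (a1*(a2+a4)-s)^2
            = (a2+a4)^2*(a0*(2*a2+a3+a4)-a1^2) + a1^2*(a3*a4-a2^2) + 2*a1*(a2+a4)*s := by
          linear_combination -hs2
        rcases eq_or_lt_of_le hdet with hq|hq
        · have hs' : s = 0 := by
            have h' : s^2 = 0 := by rw [hs2, ← hq]; ring
            exact pow_eq_zero_iff (n := 2) (by norm_num) |>.mp h'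
          rw [hs'] at e ⊢
          nlinarith [mul_nonneg (sq_nonneg (a2+a4)) hP, mul_nonneg (sq_nonneg a1) hdB]
        · nlinarith [sq_nonneg ((a2+a4)*s + a1*(a3*a4-a2^2)),
            mul_nonneg (sq_nonneg (a2+a4)) hP]
      -- the h(lam) identity
      have hh : (2*a2+a3+a4)*lam^2 - 2*a1*(a2+a3)*lam + a3*a1^2 = a0*(a3*a4-a2^2) := by
        apply mul_left_cancel₀ hDne
        linear_combination ((2*a2+a3+a4)*lam + s - a1*(a2+a3)) * hlam + hs2
      -- key3 (a0-scaled)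
      have key3 : (a0*a3 - lam^2)*(a0*a4 - (a1-lam)^2) = (a0*a2 - lam*(a1-lam))^2 := by
        linear_combination (-a0) * hh
      have halam : a1 - lam = (a1*(a2+a4)-s)/(2*a2+a3+a4) := by
        rw [eq_div_iff hDne]; linear_combination -hlam
      have hlam2 : lam^2 ≤ a0*a3 := by
        have e' : lam^2 = (a1*(a2+a3)+s)^2/(2*a2+a3+a4)^2 := by rw [hlamdef, div_pow]
        rw [e', div_le_iff₀ (by positivity)]
        linarith
      have halam2 : (a1-lam)^2 ≤ a0*a4 := by
        have e' : (a1-lam)^2 = (a1*(a2+a4)-s)^2/(2*a2+a3+a4)^2 := by rw [halam, div_pow]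
        rw [e', div_le_iff₀ (by positivity)]
        linarith
      -- witnesses
      obtain ⟨sa, hsadef⟩ : ∃ sa, sa = Real.sqrt a0 := ⟨_, rfl⟩
      have hsa2 : sa^2 = a0 := hsadef ▸ Real.sq_sqrt h0
      have hsane : sa ≠ 0 := by
        rw [hsadef]; exact ne_of_gt (Real.sqrt_pos.mpr ha0)
      have ha0ne : a0 ≠ 0 := ne_of_gt ha0
      have hm11 : 0 ≤ a3 - lam^2/a0 := by
        rw [sub_nonneg, div_le_iff₀ ha0]; linarith
      have hm22 : 0 ≤ a4 - (a1-lam)^2/a0 := by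
        rw [sub_nonneg, div_le_iff₀ ha0]; linarith
      have hkey3' : (a3 - lam^2/a0) * (a4 - (a1-lam)^2/a0) = (a2 - lam*(a1-lam)/a0)^2 := by
        have e1 : a3 - lam^2/a0 = (a0*a3 - lam^2)/a0 := by field_simp
        have e2 : a4 - (a1-lam)^2/a0 = (a0*a4 - (a1-lam)^2)/a0 := by field_simp
        have e3 : a2 - lam*(a1-lam)/a0 = (a0*a2 - lam*(a1-lam))/a0 := by field_simp
        rw [e1, e2, e3, div_mul_div_comm, div_pow, key3]
        ring_nf
      rcases eq_or_lt_of_le hm11 with hm11z|hm11pos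
      · -- m11 = 0, so m12 = 0
        have hm12z : a2 - lam*(a1-lam)/a0 = 0 := by
          have h' : (a2 - lam*(a1-lam)/a0)^2 = 0 := by rw [← hkey3', ← hm11z]; ring
          exact pow_eq_zero_iff (n := 2) (by norm_num) |>.mp h'
        refine ⟨sa, (a1-lam)/sa, lam/sa, 0, Real.sqrt (a4 - (a1-lam)^2/a0), 0,
          ?_, ?_, ?_, ?_, ?_⟩
        · rw [hsa2]; ring
        · field_simp; ring
        · have h' : a2 = lam*(a1-lam)/a0 := by linarith
          rw [h', mul_zero, add_zero, div_mul_div_comm, ← hsa2]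
          ring_nf
        · have h' : a3 = lam^2/a0 := by linarith
          rw [h', div_pow, hsa2]
          ring
        · rw [Real.sq_sqrt hm22, div_pow, hsa2]
          ring
      · -- m11 > 0
        obtain ⟨sm, hsmdef⟩ : ∃ sm, sm = Real.sqrt (a3 - lam^2/a0) := ⟨_, rfl⟩
        have hsm2 : sm^2 = a3 - lam^2/a0 := hsmdef ▸ Real.sq_sqrt hm11
        have hsmne : sm ≠ 0 := by
          rw [hsmdef]; exact ne_of_gt (Real.sqrt_pos.mpr hm11pos)
        refine ⟨sa, (a1-lam)/sa, lam/sa, 0, (a2 - lam*(a1-lam)/a0)/sm, sm,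
          ?_, ?_, ?_, ?_, ?_⟩
        · rw [hsa2]; ring
        · field_simp; ring
        · rw [div_mul_cancel₀ _ hsmne, div_mul_div_comm, ← hsa2]
          ring_nf
        · rw [hsm2, div_pow, hsa2]
          ring
        · simp only [div_pow]
          rw [hsm2, hsa2]
          have h' : (a2 - lam*(a1-lam)/a0)^2/(a3 - lam^2/a0) = a4 - (a1-lam)^2/a0 := by
            rw [← hkey3']
            rw [mul_comm, mul_div_assoc, div_self (ne_of_gt hm11pos), mul_one]
          rw [h']
          ring

lemma evalP_p' {n : ℕ} (X : Matrix (Fin n) (Fin n) ℝ) (a0 a1 a2 a3 a4 : ℝ) (p : FreeStarAlg 1)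
    (hp : p = a0 • (1 : FreeStarAlg 1) + a1 • (Xvar + Xstar) +
      a2 • (Xvar ^ 2 + Xstar ^ 2) + a3 • (Xvar * Xstar) + a4 • (Xstar * Xvar)) :
    evalP X p = a0 • (1 : Matrix (Fin n) (Fin n) ℝ) + a1 • (X + Xᵀ) +
      a2 • (X*X + Xᵀ*Xᵀ) + a3 • (X*Xᵀ) + a4 • (Xᵀ*X) := by
  rw [hp]
  simp only [evalP_add', evalP_smul', pow_two, evalP_mul', evalP_one', evalP_Xvar',
    evalP_Xstar']

lemma formA' (a0 a1 a2 a3 a4 u v : ℝ) :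
    star (![1,0] : Fin 2 → ℝ) ⬝ᵥ ((a0 • (1 : Matrix (Fin 2) (Fin 2) ℝ)
      + a1 • (!![0,v;u,0] + !![0,v;u,0]ᵀ)
      + a2 • (!![0,v;u,0]*!![0,v;u,0] + !![0,v;u,0]ᵀ*!![0,v;u,0]ᵀ)
      + a3 • (!![0,v;u,0]*!![0,v;u,0]ᵀ) + a4 • (!![0,v;u,0]ᵀ*!![0,v;u,0])) *ᵥ ![1,0])
    = a0 + 2*a2*u*v + a3*v^2 + a4*u^2 := by
  simp [dotProduct, Matrix.mulVec, Matrix.mul_apply, Fin.sum_univ_two,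
    Matrix.add_apply, Matrix.smul_apply, Matrix.transpose_apply, Matrix.vecHead,
    Matrix.vecTail, Matrix.one_apply, Matrix.vecMul]
  ring

lemma formD' (a0 a1 a2 a3 a4 u : ℝ) :
    star (![1,0] : Fin 2 → ℝ) ⬝ᵥ ((a0 • (1 : Matrix (Fin 2) (Fin 2) ℝ)
      + a1 • (!![u,0;0,0] + !![u,0;0,0]ᵀ)
      + a2 • (!![u,0;0,0]*!![u,0;0,0] + !![u,0;0,0]ᵀ*!![u,0;0,0]ᵀ)
      + a3 • (!![u,0;0,0]*!![u,0;0,0]ᵀ) + a4 • (!![u,0;0,0]ᵀ*!![u,0;0,0])) *ᵥ ![1,0])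
    = (2*a2+a3+a4)*u^2 + (2*a1)*u + a0 := by
  simp [dotProduct, Matrix.mulVec, Matrix.mul_apply, Fin.sum_univ_two,
    Matrix.add_apply, Matrix.smul_apply, Matrix.transpose_apply, Matrix.vecHead,
    Matrix.vecTail, Matrix.one_apply, Matrix.vecMul]
  ring

lemma Bfacts' (a2 a3 a4 : ℝ) (hB : (!![a3, a2; a2, a4] : Matrix (Fin 2) (Fin 2) ℝ).PosSemidef) :
    0 ≤ a3 ∧ 0 ≤ a4 ∧ a2^2 ≤ a3*a4 := by
  have hform : ∀ x : Fin 2 → ℝ,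
      star x ⬝ᵥ (!![a3, a2; a2, a4] : Matrix (Fin 2) (Fin 2) ℝ) *ᵥ x
      = a3*(x 0)^2 + 2*a2*(x 0)*(x 1) + a4*(x 1)^2 := by
    intro x
    simp [dotProduct, Matrix.mulVec, Fin.sum_univ_two]
    ring
  have h3 : 0 ≤ a3 := by
    have := hB.dotProduct_mulVec_nonneg ![1,0]; rw [hform] at this; simpa using this
  have h4 : 0 ≤ a4 := by
    have := hB.dotProduct_mulVec_nonneg ![0,1]; rw [hform] at this; simpa using this
  have hq : ∀ c : ℝ, 0 ≤ a3*c^2 + (2*a2)*c + a4 := by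
    intro c
    have := hB.dotProduct_mulVec_nonneg ![c,1]; rw [hform] at this; simpa using this
  have := discrim_le_zero (a := a3) (b := 2*a2) (c := a4) (fun x => by nlinarith [hq x])
  refine ⟨h3, h4, ?_⟩
  rw [discrim] at this
  nlinarith

/- ### STATEMENT 16 -/

set_option maxHeartbeats 2000000 in
/-- For the symmetric univariate quadratic
`p = a₀ + a₁(x + x*) + a₂(x² + (x*)²) + a₃ x x* + a₄ x* x`, six conditions
(sum of two squares; sum of squares; Gram LMI feasibility; matrix positivity at all
sizes; matrix positivity at size 2; the explicit inequalities) are equivalent. -/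
theorem stmt16 (a0 a1 a2 a3 a4 : ℝ) (p : FreeStarAlg 1)
    (hp : p = a0 • (1 : FreeStarAlg 1) + a1 • (Xvar + Xstar) +
      a2 • (Xvar ^ 2 + Xstar ^ 2) + a3 • (Xvar * Xstar) + a4 • (Xstar * Xvar)) :
    List.TFAE [
      ∃ q1 q2 : FreeStarAlg 1, p = starP q1 * q1 + starP q2 * q2,
      IsSOS p,
      ∃ lam : ℝ,
        (!![a0, lam, a1 - lam; lam, a3, a2; a1 - lam, a2, a4] :
          Matrix (Fin 3) (Fin 3) ℝ).PosSemidef,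
      ∀ (n : ℕ) (X : Matrix (Fin n) (Fin n) ℝ), (evalP X p).PosSemidef,
      ∀ X : Matrix (Fin 2) (Fin 2) ℝ, (evalP X p).PosSemidef,
      -a1 ^ 2 + a0 * (2 * a2 + a3 + a4) ≥ 0 ∧ a0 ≥ 0 ∧
        (!![a3, a2; a2, a4] : Matrix (Fin 2) (Fin 2) ℝ).PosSemidef ] := by
  tfae_have 1 → 2 := by
    rintro ⟨q1, q2, h⟩
    exact ⟨2, ![q1, q2], by simpa [Fin.sum_univ_two] using h⟩
  tfae_have 2 → 4 := by
    rintro ⟨k, q, hq⟩ n X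
    rw [hq, evalP_sum']
    have he : ∀ i, evalP X (starP (q i) * q i) = (evalP X (q i))ᵀ * (evalP X (q i)) :=
      fun i => by rw [evalP_mul', evalP_starP']
    rw [Finset.sum_congr rfl (fun i _ => he i)]
    classical
    induction (Finset.univ : Finset (Fin k)) using Finset.induction_on with
    | empty => simpa using Matrix.PosSemidef.zero
    | @insert i sfin hx ih =>
      rw [Finset.sum_insert hx]
      refine Matrix.PosSemidef.add ?_ ih
      have := Matrix.posSemidef_conjTranspose_mul_self (evalP X (q i))
      rwa [Matrix.conjTranspose_eq_transpose_of_trivial] at this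
  tfae_have 4 → 5 := fun h X => h 2 X
  tfae_have 5 → 6 := by
    intro h
    have hp0 : ∀ (X : Matrix (Fin 2) (Fin 2) ℝ) (x : Fin 2 → ℝ),
        0 ≤ star x ⬝ᵥ (evalP X p) *ᵥ x := fun X x => (h X).dotProduct_mulVec_nonneg x
    have h0 : 0 ≤ a0 := by
      have h' := hp0 !![0,0;0,0] ![1,0]
      rw [evalP_p' _ a0 a1 a2 a3 a4 p hp, formA' a0 a1 a2 a3 a4 0 0] at h'
      linarith
    have key : ∀ s t : ℝ, 0 ≤ 2*a2*s*t + a3*t^2 + a4*s^2 := by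
      intro s t
      by_contra hc
      push_neg at hc
      obtain ⟨r, hrdef⟩ : ∃ r, r = Real.sqrt ((a0+1)/(-(2*a2*s*t + a3*t^2 + a4*s^2))) :=
        ⟨_, rfl⟩
      have hr2 : r^2 = (a0+1)/(-(2*a2*s*t + a3*t^2 + a4*s^2)) := by
        rw [hrdef]
        exact Real.sq_sqrt (div_nonneg (by linarith) (by linarith))
      have h' := hp0 !![0,r*t;r*s,0] ![1,0]
      rw [evalP_p' _ a0 a1 a2 a3 a4 p hp, formA' a0 a1 a2 a3 a4 (r*s) (r*t)] at h'
      have hcne : (2*a2*s*t + a3*t^2 + a4*s^2) ≠ 0 := ne_of_lt hc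
      have hrc : r^2 * (2*a2*s*t + a3*t^2 + a4*s^2) = -(a0+1) := by
        rw [hr2, div_mul_eq_mul_div, div_neg, mul_div_assoc, div_self hcne, mul_one]
      nlinarith [h', hrc]
    have hq : ∀ u : ℝ, 0 ≤ (2*a2+a3+a4)*u^2 + (2*a1)*u + a0 := by
      intro u
      have h' := hp0 !![u,0;0,0] ![1,0]
      rw [evalP_p' _ a0 a1 a2 a3 a4 p hp, formD' a0 a1 a2 a3 a4 u] at h'
      exact h'
    have hd := discrim_le_zero (a := 2*a2+a3+a4) (b := 2*a1) (c := a0)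
      (fun x => by nlinarith [hq x])
    rw [discrim] at hd
    refine ⟨by nlinarith, h0, Matrix.PosSemidef.of_dotProduct_mulVec_nonneg ?_ ?_⟩
    · ext i j
      fin_cases i <;> fin_cases j <;> simp [Matrix.conjTranspose_apply]
    · intro x
      have hform : star x ⬝ᵥ (!![a3, a2; a2, a4] : Matrix (Fin 2) (Fin 2) ℝ) *ᵥ x
          = 2*a2*(x 1)*(x 0) + a3*(x 0)^2 + a4*(x 1)^2 := by
        simp [dotProduct, Matrix.mulVec, Fin.sum_univ_two]
        ring
      rw [hform]
      exact key (x 1) (x 0)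
  tfae_have 6 → 1 := by
    rintro ⟨hineq, h0, hB⟩
    obtain ⟨h3, h4, hdet⟩ := Bfacts' a2 a3 a4 hB
    obtain ⟨α1, β1, γ1, α2, β2, γ2, e0, e1, e2, e3, e4⟩ :=
      exists_decomp a0 a1 a2 a3 a4 h0 h3 h4 hdet (by linarith)
    refine ⟨α1 • (1:FreeStarAlg 1) + β1 • Xvar + γ1 • Xstar,
      α2 • (1:FreeStarAlg 1) + β2 • Xvar + γ2 • Xstar, ?_⟩
    rw [square_expand', square_expand', hp, pow_two, pow_two, e0, e1, e2, e3, e4]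
    module
  tfae_have 6 → 3 := by
    rintro ⟨hineq, h0, hB⟩
    obtain ⟨h3, h4, hdet⟩ := Bfacts' a2 a3 a4 hB
    obtain ⟨α1, β1, γ1, α2, β2, γ2, e0, e1, e2, e3, e4⟩ :=
      exists_decomp a0 a1 a2 a3 a4 h0 h3 h4 hdet (by linarith)
    refine ⟨α1*γ1 + α2*γ2, Matrix.PosSemidef.of_dotProduct_mulVec_nonneg ?_ ?_⟩
    · ext i j
      fin_cases i <;> fin_cases j <;> simp [Matrix.conjTranspose_apply]
    · intro x
      have hform : star x ⬝ᵥ (!![a0, α1*γ1 + α2*γ2, a1 - (α1*γ1 + α2*γ2);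
            α1*γ1 + α2*γ2, a3, a2; a1 - (α1*γ1 + α2*γ2), a2, a4] :
          Matrix (Fin 3) (Fin 3) ℝ) *ᵥ x
          = a0*(x 0)^2 + 2*(α1*γ1 + α2*γ2)*(x 0)*(x 1) + 2*(a1 - (α1*γ1 + α2*γ2))*(x 0)*(x 2)
            + a3*(x 1)^2 + 2*a2*(x 1)*(x 2) + a4*(x 2)^2 := by
        simp [dotProduct, Matrix.mulVec, Fin.sum_univ_three]
        ring
      rw [hform]
      have hid : a0*(x 0)^2 + 2*(α1*γ1 + α2*γ2)*(x 0)*(x 1)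
            + 2*(a1 - (α1*γ1 + α2*γ2))*(x 0)*(x 2)
            + a3*(x 1)^2 + 2*a2*(x 1)*(x 2) + a4*(x 2)^2
          = (α1*(x 0) + γ1*(x 1) + β1*(x 2))^2 + (α2*(x 0) + γ2*(x 1) + β2*(x 2))^2 := by
        linear_combination (x 0)^2 * e0 + 2*(x 0)*(x 2) * e1 + 2*(x 1)*(x 2) * e2
          + (x 1)^2 * e3 + (x 2)^2 * e4
      rw [hid]
      positivity
  tfae_have 3 → 6 := by
    rintro ⟨lam, hG⟩
    have hform : ∀ x : Fin 3 → ℝ,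
        star x ⬝ᵥ (!![a0, lam, a1 - lam; lam, a3, a2; a1 - lam, a2, a4] :
          Matrix (Fin 3) (Fin 3) ℝ) *ᵥ x
        = a0*(x 0)^2 + 2*lam*(x 0)*(x 1) + 2*(a1-lam)*(x 0)*(x 2)
          + a3*(x 1)^2 + 2*a2*(x 1)*(x 2) + a4*(x 2)^2 := by
      intro x
      simp [dotProduct, Matrix.mulVec, Fin.sum_univ_three]
      ring
    have h0 : 0 ≤ a0 := by
      have := hG.dotProduct_mulVec_nonneg ![1,0,0]; rw [hform] at this; simpa using this
    have hq : ∀ c : ℝ, 0 ≤ a0*c^2 + (2*a1)*c + (2*a2+a3+a4) := by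
      intro c
      have := hG.dotProduct_mulVec_nonneg ![c,1,1]; rw [hform] at this
      norm_num [Matrix.cons_val_zero, Matrix.cons_val_one, Matrix.head_cons,
        Matrix.cons_val_two, Matrix.tail_cons] at this
      nlinarith [this]
    have hd := discrim_le_zero (a := a0) (b := 2*a1) (c := 2*a2+a3+a4)
      (fun x => by nlinarith [hq x])
    rw [discrim] at hd
    refine ⟨by nlinarith, h0, Matrix.PosSemidef.of_dotProduct_mulVec_nonneg ?_ ?_⟩
    · ext i j
      fin_cases i <;> fin_cases j <;> simp [Matrix.conjTranspose_apply]
    · intro x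
      have hform2 : star x ⬝ᵥ (!![a3, a2; a2, a4] : Matrix (Fin 2) (Fin 2) ℝ) *ᵥ x
          = a3*(x 0)^2 + 2*a2*(x 0)*(x 1) + a4*(x 1)^2 := by
        simp [dotProduct, Matrix.mulVec, Fin.sum_univ_two]
        ring
      rw [hform2]
      have := hG.dotProduct_mulVec_nonneg ![0, x 0, x 1]; rw [hform] at this
      norm_num [Matrix.cons_val_zero, Matrix.cons_val_one, Matrix.head_cons,
        Matrix.cons_val_two, Matrix.tail_cons] at this
      nlinarith [this]
  tfae_finish
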